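/- Let σ₁, σ₂ be simplices in a finite simplicial complex X of dimensions d₁ and d₂ respectively, intersecting in a common face of dimension d₃ (d₃ = -1 if disjoint), and let f : X → ℝⁿ be a general position map. If d₁ + d₂ - d₃ < n, then f restricted to σ₁ ∪ σ₂ is injective. -/

import Mathlib

open Geometry Set

/-- A set of points in `ℝⁿ` is in general position if every subset of at most `n+1`
points is affinely independent. -/
def InGeneralPosition (n : ℕ) (S : Set (Fin n → ℝ)) : Prop :=
  ∀ t : Finset (Fin n → ℝ), ↑t ⊆ S → t.card ≤ n + 1 →
    AffineIndependent ℝ ((↑) : t → (Fin n → ℝ))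

/-- A general position map `f : X → ℝⁿ`: linear (affine) on each simplex of `X`,
injective on the vertex set, with vertex images in general position. -/
def IsGeneralPositionMap {m n : ℕ} (X : SimplicialComplex ℝ (Fin m → ℝ))
    (f : (Fin m → ℝ) → (Fin n → ℝ)) : Prop :=
  (∀ σ ∈ X.faces, ∃ g : (Fin m → ℝ) →ᵃ[ℝ] (Fin n → ℝ),
      ∀ x ∈ convexHull ℝ (σ : Set (Fin m → ℝ)), f x = g x) ∧
  Set.InjOn f X.vertices ∧
  InGeneralPosition n (f '' X.vertices)

/-- if two simplices of dimensions `d₁, d₂` meet in a common face of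
dimension `d₃` and `d₁ + d₂ - d₃ < n`, then a general position map is injective on
their union. Here `dᵢ = σᵢ.card - 1`, computed in `ℤ` (`d₃ = -1` when disjoint). -/
theorem generalPositionMap_injOn_union {m n : ℕ}
    (X : SimplicialComplex ℝ (Fin m → ℝ)) (hX : X.faces.Finite)
    (f : (Fin m → ℝ) → (Fin n → ℝ)) (hf : IsGeneralPositionMap X f)
    (σ₁ σ₂ : Finset (Fin m → ℝ)) (h₁ : σ₁ ∈ X.faces) (h₂ : σ₂ ∈ X.faces)
    (hface : (σ₁ ∩ σ₂).Nonempty → σ₁ ∩ σ₂ ∈ X.faces)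
    (hd : ((σ₁.card : ℤ) - 1) + ((σ₂.card : ℤ) - 1) - (((σ₁ ∩ σ₂).card : ℤ) - 1) < n) :
    Set.InjOn f (convexHull ℝ (σ₁ : Set (Fin m → ℝ)) ∪ convexHull ℝ (σ₂ : Set (Fin m → ℝ))) := by
  classical
  obtain ⟨haffmap, hinjv, hgp⟩ := hf
  set u : Finset (Fin m → ℝ) := σ₁ ∪ σ₂ with hu
  have hvert : ∀ v ∈ u, v ∈ X.vertices := by
    intro v hv
    rcases Finset.mem_union.1 hv with h | h
    · exact X.down_closed h₁ (Finset.singleton_subset_iff.2 h) (Finset.singleton_nonempty _)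
    · exact X.down_closed h₂ (Finset.singleton_subset_iff.2 h) (Finset.singleton_nonempty _)
  have hinju : Set.InjOn f ↑u := fun a ha b hb hab =>
    hinjv (hvert a ha) (hvert b hb) hab
  have hcard : u.card ≤ n + 1 := by
    have hc := Finset.card_union_add_card_inter σ₁ σ₂
    have : u.card = (σ₁ ∪ σ₂).card := by rw [hu]
    omega
  -- affine independence of f on u
  have haffu : AffineIndependent ℝ (fun v : {x // x ∈ u} => f ↑v) := by
    have h1 : ↑(u.image f) ⊆ f '' X.vertices := by
      intro y hy
      obtain ⟨v, hv, rfl⟩ := Finset.mem_image.1 (Finset.mem_coe.1 hy)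
      exact ⟨v, hvert v hv, rfl⟩
    have h2 : (u.image f).card ≤ n + 1 := le_trans (Finset.card_image_le) hcard
    exact (hgp (u.image f) h1 h2).comp_embedding
      ⟨fun v => ⟨f ↑v, Finset.mem_image_of_mem f v.2⟩, fun a b hab =>
        Subtype.ext (hinju a.2 b.2 (congrArg Subtype.val hab))⟩
  -- key: barycentric representation over the subtype of u
  have key : ∀ τ : Finset (Fin m → ℝ), τ ∈ X.faces → τ ⊆ u →
      ∀ x ∈ convexHull ℝ (τ : Set (Fin m → ℝ)),
      ∃ W : {v // v ∈ u} → ℝ,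
        (∑ i ∈ τ.subtype (· ∈ u), W i = 1) ∧
        (τ.subtype (· ∈ u)).affineCombination ℝ (fun v => (↑v : Fin m → ℝ)) W = x ∧
        (τ.subtype (· ∈ u)).affineCombination ℝ (fun v => f ↑v) W = f x := by
    intro τ hτ hτu x hx
    obtain ⟨g, hg⟩ := haffmap τ hτ
    have hmap : (τ.subtype (· ∈ u)).map (Function.Embedding.subtype _) = τ :=
      Finset.subtype_map_of_mem hτu
    have hx' := hx
    rw [Finset.convexHull_eq] at hx'
    obtain ⟨w, hw0, hw1, hwx⟩ := hx'
    have hsum0 := Finset.sum_map (τ.subtype (· ∈ u)) (Function.Embedding.subtype _) w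
    rw [hmap] at hsum0
    have hsum : ∑ i ∈ τ.subtype (· ∈ u), (w ∘ Subtype.val) i = 1 := hsum0.symm.trans hw1
    have hxc : τ.affineCombination ℝ id w = x := by
      rw [affineCombination_eq_centerMass hw1]; exact hwx
    have hACid := Finset.affineCombination_map (k := ℝ) (s₂ := τ.subtype (· ∈ u))
      (Function.Embedding.subtype _) w id
    rw [hmap] at hACid
    have hACg := Finset.affineCombination_map (k := ℝ) (s₂ := τ.subtype (· ∈ u))
      (Function.Embedding.subtype _) w ⇑g
    rw [hmap] at hACg
    refine ⟨w ∘ Subtype.val, hsum, ?_, ?_⟩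
    · rw [← hxc]
      exact hACid.symm
    · have hfx : f x = g x := hg x hx
      have hmapg : g (τ.affineCombination ℝ id w) = τ.affineCombination ℝ (⇑g ∘ id) w :=
        Finset.map_affineCombination τ id w hw1 g
      have : (τ.subtype (· ∈ u)).affineCombination ℝ (fun v => f ↑v) (w ∘ Subtype.val)
          = (τ.subtype (· ∈ u)).affineCombination ℝ
              (⇑g ∘ ⇑(Function.Embedding.subtype (· ∈ u))) (w ∘ Subtype.val) := by
        refine Finset.affineCombination_congr _ (fun i _ => rfl) ?_
        intro i hi
        have hiτ : (i : Fin m → ℝ) ∈ τ := Finset.mem_subtype.1 hi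
        exact hg i (subset_convexHull ℝ (τ : Set (Fin m → ℝ)) hiτ)
      rw [this, hfx, ← hxc, hmapg]
      exact hACg.symm
  -- main argument
  intro x hx y hy hxy
  obtain ⟨τx, hτx, hτxu, hxτ⟩ : ∃ τ, τ ∈ X.faces ∧ τ ⊆ u ∧
      x ∈ convexHull ℝ (τ : Set (Fin m → ℝ)) := by
    rcases hx with h | h
    · exact ⟨σ₁, h₁, Finset.subset_union_left, h⟩
    · exact ⟨σ₂, h₂, Finset.subset_union_right, h⟩
  obtain ⟨τy, hτy, hτyu, hyτ⟩ : ∃ τ, τ ∈ X.faces ∧ τ ⊆ u ∧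
      y ∈ convexHull ℝ (τ : Set (Fin m → ℝ)) := by
    rcases hy with h | h
    · exact ⟨σ₁, h₁, Finset.subset_union_left, h⟩
    · exact ⟨σ₂, h₂, Finset.subset_union_right, h⟩
  obtain ⟨W₁, hs₁, hp₁, hf₁⟩ := key τx hτx hτxu x hxτ
  obtain ⟨W₂, hs₂, hp₂, hf₂⟩ := key τy hτy hτyu y hyτ
  have hind := (affineIndependent_iff_indicator_eq_of_affineCombination_eq ℝ
      (fun v : {v // v ∈ u} => f ↑v)).1 haffu _ _ W₁ W₂ hs₁ hs₂ (by rw [hf₁, hf₂, hxy])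
  calc x = (τx.subtype (· ∈ u)).affineCombination ℝ (fun v => (↑v : Fin m → ℝ)) W₁ := hp₁.symm
    _ = u.attach.affineCombination ℝ (fun v => (↑v : Fin m → ℝ))
          (Set.indicator ↑(τx.subtype (· ∈ u)) W₁) :=
        Finset.affineCombination_indicator_subset _ _ (fun i _ => Finset.mem_attach _ _)
    _ = u.attach.affineCombination ℝ (fun v => (↑v : Fin m → ℝ))
          (Set.indicator ↑(τy.subtype (· ∈ u)) W₂) := by rw [hind]
    _ = (τy.subtype (· ∈ u)).affineCombination ℝ (fun v => (↑v : Fin m → ℝ)) W₂ :=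
        (Finset.affineCombination_indicator_subset _ _ (fun i _ => Finset.mem_attach _ _)).symm
    _ = y := hp₂
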